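/- For the binary matrix H described in the context (p an odd prime, 1 ≤ w ≤ p), viewed as a matrix over the field GF(2) = ZMod 2 with w·p² rows and p⁴ columns, the rank of H equals p² + (w−1)(p²−1). -/
import Mathlib

open Matrix

/-- The layer-by-layer unfolding of the 2-D QC-LDPC parity-check tensor: a binary matrix
with rows indexed by layers `ℓ ∈ {0,…,w·p²−1}` and columns indexed by positions
`(x, y)` with `x, y ∈ {0,…,p²−1}`; entry `(ℓ, (x, y))` equals `1` iff
`x ≡ ℓ + ζ_{⌊ℓ/p²⌋}(⌊ℓ/p⌋) + ⌊ℓ/p²⌋·(φ(⌊x/p⌋) + ψ(⌊y/p⌋)) (mod p)` and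
`y ≡ ℓ + ⌊ℓ/p²⌋·φ(⌊x/p⌋) (mod p)`. -/
def Hmat (p w : ℕ) (φ ψ : ZMod p → ZMod p) (ζ : ℕ → ZMod p → ZMod p) :
    Matrix (Fin (w * p ^ 2)) (Fin (p ^ 2) × Fin (p ^ 2)) (ZMod 2) :=
  fun ℓ xy =>
    if (((xy.1 : ℕ) : ZMod p) =
          ((ℓ : ℕ) : ZMod p) + ζ ((ℓ : ℕ) / p ^ 2) (((ℓ : ℕ) / p : ℕ) : ZMod p) +
            (((ℓ : ℕ) / p ^ 2 : ℕ) : ZMod p) *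
              (φ (((xy.1 : ℕ) / p : ℕ) : ZMod p) + ψ (((xy.2 : ℕ) / p : ℕ) : ZMod p)) ∧
        ((xy.2 : ℕ) : ZMod p) =
          ((ℓ : ℕ) : ZMod p) +
            (((ℓ : ℕ) / p ^ 2 : ℕ) : ZMod p) * φ (((xy.1 : ℕ) / p : ℕ) : ZMod p))
    then 1 else 0

section Aux

variable {p w : ℕ} [NeZero p]

lemma QC.jpi_lt (i j : ZMod p) : j.val * p + i.val < p ^ 2 := by
  have hj := ZMod.val_lt j
  have hi := ZMod.val_lt i
  calc j.val * p + i.val < j.val * p + p := by omega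
    _ = (j.val + 1) * p := by ring
    _ ≤ p * p := Nat.mul_le_mul_right p hj
    _ = p ^ 2 := (pow_two p).symm

def QC.rowIdx (m : Fin w) (i j : ZMod p) : Fin (w * p ^ 2) :=
  ⟨m.val * p ^ 2 + (j.val * p + i.val), by
    have h1 := QC.jpi_lt i j
    calc m.val * p ^ 2 + (j.val * p + i.val) < (m.val + 1) * p ^ 2 := by
          have : (m.val + 1) * p ^ 2 = m.val * p ^ 2 + p ^ 2 := by ring
          omega
      _ ≤ w * p ^ 2 := Nat.mul_le_mul_right _ m.isLt⟩

def QC.colIdx (a r : ZMod p) : Fin (p ^ 2) := ⟨a.val * p + r.val, QC.jpi_lt r a⟩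

namespace QC

lemma cast_val (i : ZMod p) : ((i.val : ℕ) : ZMod p) = i := by
  simp [ZMod.natCast_val, ZMod.cast_id]

lemma rowIdx_val (m : Fin w) (i j : ZMod p) :
    ((rowIdx m i j : ℕ)) = i.val + p * (j.val + p * m.val) := by
  show m.val * p ^ 2 + (j.val * p + i.val) = _
  ring

lemma rowIdx_div_p2 (m : Fin w) (i j : ZMod p) : (rowIdx m i j : ℕ) / p ^ 2 = m.val := by
  have h : (rowIdx m i j : ℕ) = (j.val * p + i.val) + p ^ 2 * m.val := by
    rw [rowIdx_val]; ring
  rw [h, Nat.add_mul_div_left _ _ (pow_pos (NeZero.pos p) 2),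
    Nat.div_eq_of_lt (jpi_lt i j), zero_add]

lemma rowIdx_div_p (m : Fin w) (i j : ZMod p) : (rowIdx m i j : ℕ) / p = j.val + p * m.val := by
  have h : (rowIdx m i j : ℕ) = i.val + p * (j.val + p * m.val) := rowIdx_val m i j
  rw [h, Nat.add_mul_div_left _ _ (NeZero.pos p), Nat.div_eq_of_lt (ZMod.val_lt i), zero_add]

lemma cast_rowIdx (m : Fin w) (i j : ZMod p) : (((rowIdx m i j : ℕ)) : ZMod p) = i := by
  rw [rowIdx_val]
  push_cast
  simp [ZMod.natCast_self, cast_val]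

lemma cast_rowIdx_div_p (m : Fin w) (i j : ZMod p) :
    ((((rowIdx m i j : ℕ)) / p : ℕ) : ZMod p) = j := by
  rw [rowIdx_div_p]
  push_cast
  simp [ZMod.natCast_self, cast_val]

lemma colIdx_val (a r : ZMod p) : ((colIdx a r : ℕ)) = r.val + p * a.val := by
  show a.val * p + r.val = _; ring

lemma cast_colIdx (a r : ZMod p) : (((colIdx a r : ℕ)) : ZMod p) = r := by
  rw [colIdx_val]; push_cast; simp [ZMod.natCast_self, cast_val]

lemma colIdx_div_p (a r : ZMod p) : (colIdx a r : ℕ) / p = a.val := by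
  rw [colIdx_val, Nat.add_mul_div_left _ _ (NeZero.pos p), Nat.div_eq_of_lt (ZMod.val_lt r),
    zero_add]

lemma cast_colIdx_div_p (a r : ZMod p) : ((((colIdx a r : ℕ)) / p : ℕ) : ZMod p) = a := by
  rw [colIdx_div_p, cast_val]

lemma Hmat_entry (φ ψ : ZMod p → ZMod p) (ζ : ℕ → ZMod p → ZMod p)
    (m : Fin w) (i j a b r s : ZMod p) :
    Hmat p w φ ψ ζ (rowIdx m i j) (colIdx a r, colIdx b s) =
      if (r = i + ζ m.val j + (m.val : ZMod p) * (φ a + ψ b) ∧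
          s = i + (m.val : ZMod p) * φ a) then 1 else 0 := by
  show (if _ then _ else _) = _
  rw [cast_colIdx, cast_colIdx, cast_colIdx_div_p, cast_colIdx_div_p, cast_rowIdx,
    cast_rowIdx_div_p, rowIdx_div_p2]

def rowEquiv : (Fin w × ZMod p × ZMod p) ≃ Fin (w * p ^ 2) where
  toFun x := rowIdx x.1 x.2.1 x.2.2
  invFun ℓ := (⟨(ℓ : ℕ) / p ^ 2,
      (Nat.div_lt_iff_lt_mul (pow_pos (NeZero.pos p) 2)).2 ℓ.isLt⟩,
      (((ℓ : ℕ)) : ZMod p), ((((ℓ : ℕ)) / p : ℕ) : ZMod p))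
  left_inv := by
    rintro ⟨m, i, j⟩
    refine Prod.ext (Fin.ext ?_) (Prod.ext ?_ ?_)
    · exact rowIdx_div_p2 m i j
    · exact cast_rowIdx m i j
    · exact cast_rowIdx_div_p m i j
  right_inv := by
    intro ℓ
    apply Fin.ext
    show ((ℓ : ℕ) / p ^ 2) * p ^ 2 +
        ((((ℓ : ℕ) / p : ℕ) : ZMod p).val * p + (((ℓ : ℕ) : ZMod p)).val) = (ℓ : ℕ)
    rw [ZMod.val_natCast, ZMod.val_natCast]
    have h1 := Nat.div_add_mod (ℓ : ℕ) p
    have h2 := Nat.div_add_mod ((ℓ : ℕ) / p) p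
    have h3 : (ℓ : ℕ) / p / p = (ℓ : ℕ) / p ^ 2 := by
      rw [Nat.div_div_eq_div_mul, ← pow_two]
    rw [h3] at h2
    calc ((ℓ : ℕ) / p ^ 2) * p ^ 2 + (((ℓ : ℕ) / p) % p * p + (ℓ : ℕ) % p)
        = (p * ((ℓ : ℕ) / p ^ 2) + ((ℓ : ℕ) / p) % p) * p + (ℓ : ℕ) % p := by ring
      _ = (ℓ : ℕ) := by rw [h2, mul_comm]; exact h1

def colEquiv : (ZMod p × ZMod p) ≃ Fin (p ^ 2) where
  toFun x := colIdx x.1 x.2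
  invFun y := (((((y : ℕ)) / p : ℕ) : ZMod p), (((y : ℕ)) : ZMod p))
  left_inv := by
    rintro ⟨a, r⟩
    exact Prod.ext (cast_colIdx_div_p a r) (cast_colIdx a r)
  right_inv := by
    intro y
    apply Fin.ext
    show ((((y : ℕ)) / p : ℕ) : ZMod p).val * p + ((((y : ℕ)) : ZMod p)).val = (y : ℕ)
    rw [ZMod.val_natCast, ZMod.val_natCast]
    have h1 := Nat.div_add_mod (y : ℕ) p
    have h2 : (y : ℕ) / p < p := by
      rw [Nat.div_lt_iff_lt_mul (NeZero.pos p), ← sq]; exact y.isLt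
    rw [Nat.mod_eq_of_lt h2, mul_comm]
    exact h1

end QC

end Aux
section Main

namespace QC

variable {p w : ℕ} [NeZero p]

lemma key_sum (φ ψ : ZMod p → ZMod p) (ζ : ℕ → ZMod p → ZMod p)
    (hζ : ∀ m < w, Function.Bijective (ζ m))
    (c : Fin (w * p ^ 2) → ZMod 2) (a b r s : ZMod p) :
    (∑ ℓ, Hmat p w φ ψ ζ ℓ (colIdx a r, colIdx b s) * c ℓ) =
      ∑ m : Fin w, c (rowIdx m (s - (m.val : ZMod p) * φ a)
        ((Equiv.ofBijective _ (hζ m.val m.isLt)).symm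
          (r - s - (m.val : ZMod p) * ψ b))) := by
  rw [← Equiv.sum_comp (rowEquiv (p := p) (w := w))
    (fun ℓ => Hmat p w φ ψ ζ ℓ (colIdx a r, colIdx b s) * c ℓ)]
  rw [Fintype.sum_prod_type]
  refine Finset.sum_congr rfl fun m _ => ?_
  rw [Fintype.sum_prod_type]
  set M : ZMod p := (m.val : ZMod p) with hM
  set ζe : ZMod p ≃ ZMod p := Equiv.ofBijective _ (hζ m.val m.isLt) with hζe
  set I : ZMod p := s - M * φ a with hI
  set J : ZMod p := ζe.symm (r - s - M * ψ b) with hJ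
  have hζeapp : ∀ j : ZMod p, ζe j = ζ m.val j := fun j => rfl
  have hcond : ∀ i j : ZMod p,
      (r = i + ζ m.val j + M * (φ a + ψ b) ∧ s = i + M * φ a) ↔ (i = I ∧ j = J) := by
    intro i j
    constructor
    · rintro ⟨h1, h2⟩
      have hi : i = I := by rw [hI, h2]; ring
      refine ⟨hi, ?_⟩
      have hz : ζe j = r - s - M * ψ b := by
        rw [hζeapp, h1, h2]; ring
      rw [hJ, ← hz, Equiv.symm_apply_apply]
    · rintro ⟨hi, hj⟩
      subst hi; subst hj
      have hz : ζ m.val J = r - s - M * ψ b := by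
        rw [← hζeapp, hJ, Equiv.apply_symm_apply]
      constructor
      · rw [hz, hI]; ring
      · rw [hI]; ring
  have hentry : ∀ i j : ZMod p,
      Hmat p w φ ψ ζ (rowEquiv (m, i, j)) (colIdx a r, colIdx b s) * c (rowEquiv (m, i, j))
        = if (i = I ∧ j = J) then c (rowIdx m i j) else 0 := by
    intro i j
    have : rowEquiv (m, i, j) = rowIdx m i j := rfl
    rw [this, Hmat_entry]
    by_cases h : (r = i + ζ m.val j + M * (φ a + ψ b) ∧ s = i + M * φ a)
    · rw [if_pos h, if_pos ((hcond i j).mp h), one_mul]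
    · rw [if_neg h, if_neg (fun hc => h ((hcond i j).mpr hc)), zero_mul]
  calc (∑ i : ZMod p, ∑ j : ZMod p,
        Hmat p w φ ψ ζ (rowEquiv (m, i, j)) (colIdx a r, colIdx b s) * c (rowEquiv (m, i, j)))
      = ∑ i : ZMod p, ∑ j : ZMod p, if (i = I ∧ j = J) then c (rowIdx m i j) else 0 := by
        refine Finset.sum_congr rfl fun i _ => Finset.sum_congr rfl fun j _ => hentry i j
    _ = ∑ i : ZMod p, if i = I then c (rowIdx m i J) else 0 := by
        refine Finset.sum_congr rfl fun i _ => ?_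
        by_cases h : i = I <;> simp [h]
    _ = c (rowIdx m I J) := by
        rw [Finset.sum_ite_eq' Finset.univ I (fun i => c (rowIdx m i J))]
        simp

lemma avg (hp : p.Prime) (hodd : Odd p) (hwp : w ≤ p)
    (d : Fin w → ZMod p → ZMod p → ZMod 2)
    (hrel : ∀ α β s u : ZMod p,
      ∑ m : Fin w, d m (s - (m.val : ZMod p) * α) (u - (m.val : ZMod p) * β) = 0)
    (k : Fin w) (s₀ u₀ : ZMod p) : d k s₀ u₀ = d k 0 0 := by
  haveI : Fact p.Prime := ⟨hp⟩
  have hp1 : ((p : ℕ) : ZMod 2) = 1 := by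
    have h2 : p % 2 = 1 := Nat.odd_iff.mp hodd
    rw [← ZMod.natCast_mod p 2, h2, Nat.cast_one]
  have hcast_inj : ∀ m k : Fin w, (m.val : ZMod p) = (k.val : ZMod p) → m = k := by
    intro m n h
    have h2 := congrArg ZMod.val h
    rw [ZMod.val_natCast, ZMod.val_natCast,
      Nat.mod_eq_of_lt (lt_of_lt_of_le m.isLt hwp),
      Nat.mod_eq_of_lt (lt_of_lt_of_le n.isLt hwp)] at h2
    exact Fin.ext h2
  have main : ∀ s₀ u₀ : ZMod p, d k s₀ u₀ =
      ∑ m ∈ Finset.univ.erase k, (∑ x : ZMod p × ZMod p, d m x.1 x.2) := by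
    intro s₀ u₀
    have h0 : ∑ v : ZMod p × ZMod p, ∑ m : Fin w,
        d m ((s₀ + (k.val : ZMod p) * v.1) - (m.val : ZMod p) * v.1)
            ((u₀ + (k.val : ZMod p) * v.2) - (m.val : ZMod p) * v.2) = 0 :=
      Finset.sum_eq_zero (fun v _ => hrel v.1 v.2 _ _)
    rw [Finset.sum_comm] at h0
    rw [← Finset.add_sum_erase _ _ (Finset.mem_univ k)] at h0
    have hk : (∑ v : ZMod p × ZMod p,
        d k ((s₀ + (k.val : ZMod p) * v.1) - (k.val : ZMod p) * v.1)
            ((u₀ + (k.val : ZMod p) * v.2) - (k.val : ZMod p) * v.2)) = d k s₀ u₀ := by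
      have hsimp : ∀ v : ZMod p × ZMod p,
          d k ((s₀ + (k.val : ZMod p) * v.1) - (k.val : ZMod p) * v.1)
            ((u₀ + (k.val : ZMod p) * v.2) - (k.val : ZMod p) * v.2) = d k s₀ u₀ := by
        intro v; rw [add_sub_cancel_right, add_sub_cancel_right]
      rw [Finset.sum_congr rfl (fun v _ => hsimp v), Finset.sum_const]
      rw [Finset.card_univ, Fintype.card_prod, ZMod.card, nsmul_eq_mul]
      push_cast
      rw [hp1]; ring
    have herase : ∀ m ∈ Finset.univ.erase k,
        (∑ v : ZMod p × ZMod p,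
          d m ((s₀ + (k.val : ZMod p) * v.1) - (m.val : ZMod p) * v.1)
              ((u₀ + (k.val : ZMod p) * v.2) - (m.val : ZMod p) * v.2))
        = ∑ x : ZMod p × ZMod p, d m x.1 x.2 := by
      intro m hm
      have hne : m ≠ k := Finset.ne_of_mem_erase hm
      set γ : ZMod p := (k.val : ZMod p) - (m.val : ZMod p) with hγdef
      have hγ : γ ≠ 0 := by
        rw [hγdef, sub_ne_zero]
        exact fun h => hne (hcast_inj m k h.symm)
      set E1 : ZMod p ≃ ZMod p := (Equiv.mulLeft₀ γ hγ).trans (Equiv.addLeft s₀) with hE1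
      set E2 : ZMod p ≃ ZMod p := (Equiv.mulLeft₀ γ hγ).trans (Equiv.addLeft u₀) with hE2
      have := Equiv.sum_comp (Equiv.prodCongr E1 E2) (fun x : ZMod p × ZMod p => d m x.1 x.2)
      rw [← this]
      refine Finset.sum_congr rfl fun v _ => ?_
      have e1 : E1 v.1 = s₀ + γ * v.1 := rfl
      have e2 : E2 v.2 = u₀ + γ * v.2 := rfl
      have a1 : (s₀ + (k.val : ZMod p) * v.1) - (m.val : ZMod p) * v.1 = s₀ + γ * v.1 := by
        rw [hγdef]; ring
      have a2 : (u₀ + (k.val : ZMod p) * v.2) - (m.val : ZMod p) * v.2 = u₀ + γ * v.2 := by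
        rw [hγdef]; ring
      simp only [Equiv.prodCongr_apply, Prod.map]
      rw [a1, a2, e1, e2]
    rw [hk, Finset.sum_congr rfl herase] at h0
    have := eq_neg_of_add_eq_zero_left h0
    rwa [CharTwo.neg_eq] at this
  rw [main s₀ u₀, main 0 0]

end QC

end Main
namespace QC

lemma mem_ker_iff {p w : ℕ} [NeZero p] (hp : p.Prime) (hodd : Odd p) (hwp : w ≤ p)
    (φ ψ : ZMod p → ZMod p) (hφ : Function.Bijective φ) (hψ : Function.Bijective ψ)
    (ζ : ℕ → ZMod p → ZMod p) (hζ : ∀ m < w, Function.Bijective (ζ m))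
    (c : Fin (w * p ^ 2) → ZMod 2) :
    c ∈ LinearMap.ker ((Hmat p w φ ψ ζ)ᵀ.mulVecLin) ↔
      ∃ e : Fin w → ZMod 2, (∀ (m : Fin w) (i j : ZMod p), c (rowIdx m i j) = e m) ∧
        ∑ m : Fin w, e m = 0 := by
  haveI : Fact p.Prime := ⟨hp⟩
  have hker : c ∈ LinearMap.ker ((Hmat p w φ ψ ζ)ᵀ.mulVecLin) ↔
      ∀ x : Fin (p ^ 2) × Fin (p ^ 2), (∑ ℓ, Hmat p w φ ψ ζ ℓ x * c ℓ) = 0 := by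
    rw [LinearMap.mem_ker, funext_iff]
    apply forall_congr'
    intro x
    simp [Matrix.mulVecLin_apply, Matrix.mulVec, Matrix.vecMul, dotProduct,
      Matrix.transpose_apply, mul_comm]
  rw [hker]
  constructor
  · intro hc
    set φe : ZMod p ≃ ZMod p := Equiv.ofBijective φ hφ with hφe
    set ψe : ZMod p ≃ ZMod p := Equiv.ofBijective ψ hψ with hψe
    set d : Fin w → ZMod p → ZMod p → ZMod 2 := fun m i k =>
      c (rowIdx m i ((Equiv.ofBijective _ (hζ m.1 m.isLt)).symm k)) with hd
    have hdrel : ∀ α β s u : ZMod p,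
        ∑ m : Fin w, d m (s - (m.1 : ZMod p) * α) (u - (m.1 : ZMod p) * β) = 0 := by
      intro α β s u
      have h1 := hc (colIdx (φe.symm α) (u + s), colIdx (ψe.symm β) s)
      rw [key_sum φ ψ ζ hζ c] at h1
      have hφa : φ (φe.symm α) = α := φe.apply_symm_apply α
      have hψb : ψ (ψe.symm β) = β := ψe.apply_symm_apply β
      have heq : ∀ m : Fin w,
          c (rowIdx m (s - (m.1 : ZMod p) * φ (φe.symm α))
            ((Equiv.ofBijective _ (hζ m.1 m.isLt)).symm
              (u + s - s - (m.1 : ZMod p) * ψ (ψe.symm β))))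
          = d m (s - (m.1 : ZMod p) * α) (u - (m.1 : ZMod p) * β) := by
        intro m
        have e2 : u + s - s - (m.1 : ZMod p) * ψ (ψe.symm β)
            = u - (m.1 : ZMod p) * β := by rw [hψb]; ring
        rw [hφa, e2]
      rw [Finset.sum_congr rfl (fun m _ => heq m)] at h1
      exact h1
    refine ⟨fun m => d m 0 0, ?_, ?_⟩
    · intro m i j
      have hzj : (Equiv.ofBijective _ (hζ m.1 m.isLt)).symm (ζ m.1 j) = j :=
        Equiv.symm_apply_apply _ j
      have h1 : d m i (ζ m.1 j) = c (rowIdx m i j) := by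
        show c (rowIdx m i ((Equiv.ofBijective _ (hζ m.1 m.isLt)).symm (ζ m.1 j))) = _
        rw [hzj]
      rw [← h1]
      exact avg hp hodd hwp d hdrel m i (ζ m.1 j)
    · have h0 := hdrel 0 0 0 0
      simpa using h0
  · rintro ⟨e, hce, hsum⟩
    intro x
    obtain ⟨⟨a, r⟩, h1⟩ := (colEquiv (p := p)).surjective x.1
    obtain ⟨⟨b, s⟩, h2⟩ := (colEquiv (p := p)).surjective x.2
    have hx : x = (colIdx a r, colIdx b s) := by
      rw [show x = (x.1, x.2) from rfl, ← h1, ← h2]; rfl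
    rw [hx, key_sum φ ψ ζ hζ c,
      Finset.sum_congr rfl (fun m _ => hce m _ _)]
    exact hsum

end QC

/-- Theorem 2 (gfrank of the parity-check tensor): the rank of `H` over GF(2) equals
`p² + (w−1)(p²−1)`. -/
theorem stmt_8 (p w : ℕ) (hp : p.Prime) (hodd : Odd p) (hw1 : 1 ≤ w) (hwp : w ≤ p)
    (φ ψ : ZMod p → ZMod p) (hφ : Function.Bijective φ) (hψ : Function.Bijective ψ)
    (ζ : ℕ → ZMod p → ZMod p) (hζ : ∀ m < w, Function.Bijective (ζ m)) :
    (Hmat p w φ ψ ζ).rank = p ^ 2 + (w - 1) * (p ^ 2 - 1) := by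
  haveI : Fact p.Prime := ⟨hp⟩
  haveI : NeZero p := ⟨hp.pos.ne'⟩
  classical
  set H := Hmat p w φ ψ ζ with hH
  set Kk := LinearMap.ker (Hᵀ.mulVecLin) with hKk
  let Φ : Kk →ₗ[ZMod 2] (Fin w → ZMod 2) :=
    (LinearMap.funLeft (ZMod 2) (ZMod 2) (fun m : Fin w => QC.rowIdx m 0 0)).comp Kk.subtype
  have hΦapp : ∀ (c : Kk) (m : Fin w), Φ c m = c.1 (QC.rowIdx m 0 0) := fun c m => rfl
  have hchar : ∀ c : Fin (w * p ^ 2) → ZMod 2, c ∈ Kk ↔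
      ∃ e : Fin w → ZMod 2, (∀ (m : Fin w) (i j : ZMod p), c (QC.rowIdx m i j) = e m) ∧
        ∑ m : Fin w, e m = 0 :=
    fun c => QC.mem_ker_iff hp hodd hwp φ ψ hφ hψ ζ hζ c
  have hΦinj : Function.Injective Φ := by
    intro c1 c2 h
    obtain ⟨e1, he1, _⟩ := (hchar c1.1).mp c1.2
    obtain ⟨e2, he2, _⟩ := (hchar c2.1).mp c2.2
    apply Subtype.ext
    funext ℓ
    obtain ⟨⟨m, i, j⟩, rfl⟩ := (QC.rowEquiv (p := p) (w := w)).surjective ℓ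
    have hr : QC.rowEquiv (m, i, j) = QC.rowIdx m i j := rfl
    have hm : c1.1 (QC.rowIdx m 0 0) = c2.1 (QC.rowIdx m 0 0) := by
      rw [← hΦapp c1 m, ← hΦapp c2 m, h]
    rw [hr, he1, he2]
    calc e1 m = c1.1 (QC.rowIdx m 0 0) := (he1 m 0 0).symm
      _ = c2.1 (QC.rowIdx m 0 0) := hm
      _ = e2 m := he2 m 0 0
  let sumLF : (Fin w → ZMod 2) →ₗ[ZMod 2] ZMod 2 :=
    { toFun := fun e => ∑ m, e m,
      map_add' := by intro x y; simp [Finset.sum_add_distrib],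
      map_smul' := by intro r x; simp [Finset.mul_sum] }
  have hrange : LinearMap.range Φ = LinearMap.ker sumLF := by
    apply le_antisymm
    · rintro _ ⟨c, rfl⟩
      obtain ⟨e, hce, hesum⟩ := (hchar c.1).mp c.2
      have hΦc : Φ c = e := by funext m; rw [hΦapp c m]; exact hce m 0 0
      rw [LinearMap.mem_ker]
      show ∑ m : Fin w, (Φ c) m = 0
      rw [hΦc]; exact hesum
    · intro e he
      rw [LinearMap.mem_ker] at he
      set c : Fin (w * p ^ 2) → ZMod 2 :=
        fun ℓ => e ((QC.rowEquiv (p := p) (w := w)).symm ℓ).1 with hcdef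
      have hc : ∀ (m : Fin w) (i j : ZMod p), c (QC.rowIdx m i j) = e m := by
        intro m i j
        have hsymm : (QC.rowEquiv (p := p) (w := w)).symm (QC.rowIdx m i j) = (m, i, j) := by
          rw [show QC.rowIdx m i j = QC.rowEquiv (m, i, j) from rfl, Equiv.symm_apply_apply]
        show e ((QC.rowEquiv (p := p) (w := w)).symm (QC.rowIdx m i j)).1 = e m
        rw [hsymm]
      have hmem : c ∈ Kk := (hchar c).mpr ⟨e, hc, he⟩
      exact ⟨⟨c, hmem⟩, by funext m; rw [hΦapp ⟨c, hmem⟩ m]; exact hc m 0 0⟩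
  have hsurj : Function.Surjective sumLF := by
    intro x
    refine ⟨Pi.single ⟨0, hw1⟩ x, ?_⟩
    show ∑ m : Fin w, Pi.single (⟨0, hw1⟩ : Fin w) x m = x
    simp [Pi.single_apply]
  have hK : Module.finrank (ZMod 2) Kk = w - 1 := by
    have h1 : Module.finrank (ZMod 2) Kk
        = Module.finrank (ZMod 2) (LinearMap.range Φ) :=
      (LinearMap.finrank_range_of_inj hΦinj).symm
    rw [h1, hrange]
    have h2 := LinearMap.finrank_range_add_finrank_ker sumLF
    rw [LinearMap.range_eq_top.mpr hsurj, finrank_top, Module.finrank_self,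
      Module.finrank_pi, Fintype.card_fin] at h2
    omega
  have h3 := LinearMap.finrank_range_add_finrank_ker (Hᵀ.mulVecLin)
  rw [Module.finrank_pi, Fintype.card_fin] at h3
  have hrk : H.rank = Module.finrank (ZMod 2) (LinearMap.range Hᵀ.mulVecLin) := by
    rw [← Matrix.rank_transpose]; rfl
  rw [← hKk, hK] at h3
  rw [hrk]
  obtain ⟨w', rfl⟩ : ∃ w', w = w' + 1 := ⟨w - 1, by omega⟩
  have hp2 : 1 ≤ p ^ 2 := pow_pos hp.pos 2
  have key : ∀ X : ℕ, X + (w' + 1 - 1) = (w' + 1) * p ^ 2 →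
      X = p ^ 2 + (w' + 1 - 1) * (p ^ 2 - 1) := by
    intro X hX
    obtain ⟨P, hP⟩ : ∃ P', p ^ 2 = P' + 1 := ⟨p ^ 2 - 1, by omega⟩
    rw [hP] at hX ⊢
    simp only [Nat.add_sub_cancel] at hX ⊢
    have hexp : (w' + 1) * (P + 1) = w' * P + w' + P + 1 := by ring
    rw [hexp] at hX
    generalize w' * P = T at hX ⊢
    omega
  exact key _ h3
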